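/- Fix d ≥ 1 and γ > 0, and let D_r, D_n be Borel probability measures on ℝ^d with E_{D_r}[‖x‖₂] < ∞ and E_{D_n}[‖x‖₂] < ∞. On a probability space, let (X_j)_{j≥1} and (Y_j)_{j≥1} be i.i.d. sequences with laws D_r and D_n respectively, and for N ≥ 1 let D_r^N := (1/N) Σ_{j=1}^N δ_{X_j} and D_n^N := (1/N) Σ_{j=1}^N δ_{Y_j} be the empirical measures. Then almost surely, sup_{K ∈ S^d(γ,1)} | F(K; D_r^N, D_n^N) − F(K; D_r, D_n) | → 0 as N → ∞. -/

import Mathlib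

open MeasureTheory Metric Set Filter Pointwise

noncomputable section

abbrev Euc (d : ℕ) : Type := EuclideanSpace ℝ (Fin d)

/-- Radial function of a set: `ρ_K(x) = sup {t > 0 : t • x ∈ K}`. -/
def radialFn {d : ℕ} (K : Set (Euc d)) (x : Euc d) : ℝ :=
  sSup {t : ℝ | 0 < t ∧ t • x ∈ K}

/-- A star body: compact, `0` in the interior, star-shaped about `0`, with radial function
positive and continuous on the unit sphere. -/
def IsStarBody {d : ℕ} (K : Set (Euc d)) : Prop :=
  IsCompact K ∧ (0 : Euc d) ∈ interior K ∧
    (∀ x ∈ K, segment ℝ 0 x ⊆ K) ∧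
    (∀ u ∈ sphere (0 : Euc d) 1, 0 < radialFn K u) ∧
    ContinuousOn (radialFn K) (sphere (0 : Euc d) 1)

/-- The kernel of a star body. -/
def starKernel {d : ℕ} (K : Set (Euc d)) : Set (Euc d) :=
  {x | x ∈ K ∧ ∀ y ∈ K, segment ℝ x y ⊆ K}

/-- Radial metric between star bodies. -/
def radialDist {d : ℕ} (K L : Set (Euc d)) : ℝ :=
  ⨆ u : sphere (0 : Euc d) 1, |radialFn K (u : Euc d) - radialFn L (u : Euc d)|

/-- The adversarial objective `F(K; μ, ν) = E_μ[‖x‖_K] - E_ν[‖x‖_K]`. -/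
def Fobj {d : ℕ} (K : Set (Euc d)) (μ ν : Measure (Euc d)) : ℝ :=
  (∫ x, gauge K x ∂μ) - (∫ x, gauge K x ∂ν)


/-- The empirical measure of the first `N` samples of the sequence `X`. -/
def empiricalMeasure {d : ℕ} {Ω : Type} (X : ℕ → Ω → Euc d) (ω : Ω) (N : ℕ) :
    Measure (Euc d) :=
  (N : ENNReal)⁻¹ • ∑ j ∈ Finset.range N, Measure.dirac (X j ω)

open Topology

namespace UniformSLLNAux

open Topology

variable {d : ℕ} {γ : ℝ} {K : Set (Euc d)}

lemma gauge_lip (hγ : 0 < γ) (h0 : (0 : Euc d) ∈ interior K)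
    (hker : closedBall (0 : Euc d) γ ⊆ starKernel K) (x y : Euc d) :
    gauge K x ≤ gauge K y + ‖x - y‖ / γ := by
  have habs : Absorbent ℝ K := absorbent_nhds_zero (mem_interior_iff_mem_nhds.1 h0)
  refine le_of_forall_pos_le_add fun ε hε => ?_
  obtain ⟨t, ⟨ht0, hyt⟩, htlt⟩ :=
    exists_lt_of_csInf_lt (habs.gauge_set_nonempty (x := y))
      (show sInf {r : ℝ | 0 < r ∧ y ∈ r • K} < gauge K y + ε from lt_add_of_pos_right _ hε)
  rcases eq_or_ne x y with rfl | hxy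
  · have : (0:ℝ) ≤ ‖x - x‖ / γ := div_nonneg (norm_nonneg _) hγ.le
    linarith
  · set b : ℝ := ‖x - y‖ / γ with hbdef
    have hxyn : (0:ℝ) < ‖x - y‖ := by
      simpa [norm_sub_eq_zero_iff] using norm_pos_iff.2 (sub_ne_zero.2 hxy)
    have hbpos : 0 < b := div_pos hxyn hγ
    set w : Euc d := b⁻¹ • (x - y) with hwdef
    have hwK : w ∈ starKernel K := by
      apply hker
      rw [mem_closedBall_zero_iff, hwdef, norm_smul, Real.norm_eq_abs,
        abs_of_pos (inv_pos.2 hbpos), hbdef]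
      rw [inv_div, div_mul_cancel₀ _ hxyn.ne']
    obtain ⟨k, hkK, hyk⟩ := hyt
    have hts : (0:ℝ) < t + b := by linarith
    set z : Euc d := (b / (t + b)) • w + (t / (t + b)) • k with hzdef
    have hzK : z ∈ K := by
      refine hwK.2 k hkK ⟨b / (t + b), t / (t + b), by positivity, by positivity, ?_, rfl⟩
      field_simp
      ring
    have hxz : x ∈ (t + b) • K := by
      refine ⟨z, hzK, ?_⟩
      show (t + b) • z = x
      have hyk' : t • k = y := hyk
      rw [hzdef, hwdef, ← hyk']
      match_scalars <;> (field_simp; try ring)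
    have := gauge_le_of_mem hts.le hxz
    linarith

lemma gauge_abs_le (hγ : 0 < γ) (h0 : (0 : Euc d) ∈ interior K)
    (hker : closedBall (0 : Euc d) γ ⊆ starKernel K) (x : Euc d) :
    |gauge K x| ≤ γ⁻¹ * ‖x‖ := by
  rw [abs_of_nonneg (gauge_nonneg _)]
  have := gauge_lip hγ h0 hker x 0
  simpa [gauge_zero, div_eq_inv_mul] using this

lemma gauge_abs_sub (hγ : 0 < γ) (h0 : (0 : Euc d) ∈ interior K)
    (hker : closedBall (0 : Euc d) γ ⊆ starKernel K) (x y : Euc d) :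
    |gauge K x - gauge K y| ≤ γ⁻¹ * ‖x - y‖ := by
  rw [abs_sub_le_iff]
  constructor
  · have := gauge_lip hγ h0 hker x y
    rw [div_eq_inv_mul] at this; linarith
  · have := gauge_lip hγ h0 hker y x
    rw [div_eq_inv_mul, norm_sub_rev] at this; linarith

lemma gauge_cont (hγ : 0 < γ) (h0 : (0 : Euc d) ∈ interior K)
    (hker : closedBall (0 : Euc d) γ ⊆ starKernel K) :
    Continuous (gauge K) := by
  have : LipschitzWith ⟨γ⁻¹, inv_nonneg.2 hγ.le⟩ (gauge K) := by
    refine LipschitzWith.of_dist_le_mul fun x y => ?_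
    rw [Real.dist_eq, dist_eq_norm]
    exact gauge_abs_sub hγ h0 hker x y
  exact this.continuous

lemma gauge_homog (K : Set (Euc d)) {x : Euc d} (hx : x ≠ 0) :
    gauge K x = ‖x‖ * gauge K (‖x‖⁻¹ • x) := by
  have h1 : (‖x‖ : ℝ) • (‖x‖⁻¹ • x) = x := smul_inv_smul₀ (norm_ne_zero_iff.2 hx) x
  calc gauge K x = gauge K ((‖x‖ : ℝ) • (‖x‖⁻¹ • x)) := by rw [h1]
    _ = ‖x‖ * gauge K (‖x‖⁻¹ • x) := by
        rw [gauge_smul_of_nonneg (norm_nonneg x), smul_eq_mul]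

lemma gauge_diff_ext {L : Set (Euc d)} {ε : ℝ}
    (h : ∀ u ∈ sphere (0 : Euc d) 1, |gauge K u - gauge L u| ≤ ε) (x : Euc d) :
    |gauge K x - gauge L x| ≤ ε * ‖x‖ := by
  rcases eq_or_ne x 0 with rfl | hx
  · simp [gauge_zero]
  · have hu : ((‖x‖⁻¹ : ℝ) • x) ∈ sphere (0 : Euc d) 1 := by
      rw [mem_sphere_zero_iff_norm, norm_smul, Real.norm_eq_abs,
        abs_of_nonneg (inv_nonneg.2 (norm_nonneg x)),
        inv_mul_cancel₀ (norm_ne_zero_iff.2 hx)]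
    rw [gauge_homog K hx, gauge_homog L hx, ← mul_sub, abs_mul,
      abs_of_nonneg (norm_nonneg x), mul_comm ε ‖x‖]
    exact mul_le_mul_of_nonneg_left (h _ hu) (norm_nonneg x)


lemma integrable_dirac' {f : Euc d → ℝ} (hf : StronglyMeasurable f) (a : Euc d) :
    Integrable f (Measure.dirac a) := by
  refine ⟨hf.aestronglyMeasurable, ?_⟩
  simp [HasFiniteIntegral, lintegral_dirac]

lemma integrable_empirical {Ω : Type} (X : ℕ → Ω → Euc d) (ω : Ω) (N : ℕ)
    {f : Euc d → ℝ} (hf : StronglyMeasurable f) :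
    Integrable f (empiricalMeasure X ω N) := by
  unfold empiricalMeasure
  rcases Nat.eq_zero_or_pos N with rfl | hN
  · simp
  · refine Integrable.smul_measure ?_ (by simp [hN.ne'])
    rw [integrable_finset_sum_measure]
    exact fun j _ => integrable_dirac' hf _

lemma integral_empirical {Ω : Type} (X : ℕ → Ω → Euc d) (ω : Ω) (N : ℕ)
    {f : Euc d → ℝ} (hf : StronglyMeasurable f) :
    ∫ x, f x ∂(empiricalMeasure X ω N) = (N : ℝ)⁻¹ * ∑ j ∈ Finset.range N, f (X j ω) := by
  unfold empiricalMeasure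
  rw [integral_smul_measure, integral_finset_sum_measure (fun j _ => integrable_dirac' hf _)]
  simp [integral_dirac, ENNReal.toReal_inv]

lemma abs_integral_sub_le {ρ : Measure (Euc d)} {f g : Euc d → ℝ}
    (hf : Integrable f ρ) (hg : Integrable g ρ)
    (hn : Integrable (fun x : Euc d => ‖x‖) ρ) {ε : ℝ} (hε : 0 ≤ ε)
    (h : ∀ x, |f x - g x| ≤ ε * ‖x‖) :
    |∫ x, f x ∂ρ - ∫ x, g x ∂ρ| ≤ ε * ∫ x, ‖x‖ ∂ρ := by
  rw [← integral_sub hf hg]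
  calc |∫ x, (f x - g x) ∂ρ| ≤ ∫ x, |f x - g x| ∂ρ := by
        simpa [Real.norm_eq_abs] using norm_integral_le_integral_norm (fun x => f x - g x) (μ := ρ)
    _ ≤ ∫ x, ε * ‖x‖ ∂ρ := integral_mono (hf.sub hg).abs (hn.const_mul ε) h
    _ = ε * ∫ x, ‖x‖ ∂ρ := by rw [integral_const_mul]

lemma slln_aux {Ω : Type} [MeasureSpace Ω] [IsProbabilityMeasure (volume : Measure Ω)]
    {ρ : Measure (Euc d)} [IsProbabilityMeasure ρ] (X : ℕ → Ω → Euc d)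
    (hXm : ∀ j, Measurable (X j))
    (hXindep : ProbabilityTheory.iIndepFun X (volume : Measure Ω))
    (hXlaw : ∀ j, Measure.map (X j) (volume : Measure Ω) = ρ)
    {g : Euc d → ℝ} (hg : Measurable g) (hgi : Integrable g ρ) :
    ∀ᵐ ω ∂(volume : Measure Ω),
      Tendsto (fun N => ∫ x, g x ∂(empiricalMeasure X ω N)) atTop (𝓝 (∫ x, g x ∂ρ)) := by
  have h0 : Integrable (fun ω => g (X 0 ω)) (volume : Measure Ω) := by
    have := hgi
    rw [← hXlaw 0] at this
    exact (integrable_map_measure hg.aestronglyMeasurable (hXm 0).aemeasurable).1 this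
  have hmean : ∫ ω, g (X 0 ω) ∂(volume : Measure Ω) = ∫ x, g x ∂ρ := by
    rw [← hXlaw 0, integral_map (hXm 0).aemeasurable hg.aestronglyMeasurable]
  have hind : Pairwise (Function.onFun (ProbabilityTheory.IndepFun · · (volume : Measure Ω))
      fun j ω => g (X j ω)) := fun i j hij =>
    ProbabilityTheory.IndepFun.comp (hXindep.indepFun hij) hg hg
  have hident : ∀ j, ProbabilityTheory.IdentDistrib (fun ω => g (X j ω)) (fun ω => g (X 0 ω))
      (volume : Measure Ω) (volume : Measure Ω) := fun j =>
    ProbabilityTheory.IdentDistrib.comp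
      ⟨(hXm j).aemeasurable, (hXm 0).aemeasurable, by rw [hXlaw j, hXlaw 0]⟩ hg
  filter_upwards [ProbabilityTheory.strong_law_ae _ h0 hind hident] with ω hω
  have heq : ∀ N : ℕ, ∫ x, g x ∂(empiricalMeasure X ω N)
      = (N : ℝ)⁻¹ • ∑ j ∈ Finset.range N, g (X j ω) := fun N => by
    rw [integral_empirical X ω N hg.stronglyMeasurable, smul_eq_mul]
  rw [show (∫ x, g x ∂ρ) = ∫ ω, g (X 0 ω) ∂(volume : Measure Ω) from hmean.symm]
  simpa [heq] using hω


def SClass (d : ℕ) (γ : ℝ) : Set (Set (Euc d)) :=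
  {K : Set (Euc d) | IsStarBody K ∧ closedBall (0 : Euc d) γ ⊆ starKernel K ∧ volume K = 1}

lemma SClass.interior_mem {K : Set (Euc d)} (hK : K ∈ SClass d γ) :
    (0 : Euc d) ∈ interior K := hK.1.2.1

lemma SClass.ker {K : Set (Euc d)} (hK : K ∈ SClass d γ) :
    closedBall (0 : Euc d) γ ⊆ starKernel K := hK.2.1

lemma exists_net (hγ : 0 < γ) {ε : ℝ} (hε : 0 < ε) :
    ∃ 𝒩 : Set (Set (Euc d)), 𝒩.Finite ∧ 𝒩 ⊆ SClass d γ ∧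
      ∀ K ∈ SClass d γ, ∃ L ∈ 𝒩, ∀ u ∈ sphere (0 : Euc d) 1,
        |gauge K u - gauge L u| ≤ ε := by
  set δ : ℝ := ε * γ / 4 with hδdef
  have hδ : 0 < δ := by positivity
  obtain ⟨C, hCsub, hCfin, hCcov⟩ :=
    totallyBounded_iff_subset.1 (isCompact_sphere (0 : Euc d) 1).totallyBounded _
      (dist_mem_uniformity hδ)
  haveI : Fintype ↥C := hCfin.fintype
  set Φ : Set (Euc d) → (↥C → ℝ) := fun K c => gauge K (c : Euc d) with hΦdef
  have himg : Φ '' SClass d γ ⊆ closedBall (0 : ↥C → ℝ) γ⁻¹ := by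
    rintro _ ⟨K, hK, rfl⟩
    rw [mem_closedBall_zero_iff]
    refine pi_norm_le_iff_of_nonneg (by positivity) |>.2 fun c => ?_
    have hc : (c : Euc d) ∈ sphere (0 : Euc d) 1 := hCsub c.2
    have := gauge_abs_le hγ (SClass.interior_mem hK) (SClass.ker hK) (c : Euc d)
    rw [mem_sphere_zero_iff_norm.1 hc] at this
    simpa [Real.norm_eq_abs] using this
  have htb : TotallyBounded (Φ '' SClass d γ) :=
    (isCompact_closedBall _ _).totallyBounded.subset himg
  obtain ⟨T, hTsub, hTfin, hTcov⟩ := totallyBounded_iff_subset.1 htb _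
    (dist_mem_uniformity (half_pos hε))
  have hpre : ∀ φ, φ ∈ T → ∃ K, K ∈ SClass d γ ∧ Φ K = φ := by
    intro φ hφ
    obtain ⟨K, hK, hKφ⟩ := hTsub hφ
    exact ⟨K, hK, hKφ⟩
  choose! Kof hKS hKΦ using hpre
  refine ⟨Kof '' T, hTfin.image _, ?_, ?_⟩
  · rintro _ ⟨φ, hφ, rfl⟩
    exact hKS φ hφ
  · intro K hK
    obtain ⟨φ, hφ, hballφ⟩ := Set.mem_iUnion₂.1 (hTcov (Set.mem_image_of_mem Φ hK))
    have hballφ' : dist (Φ K) φ < ε / 2 := hballφ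
    refine ⟨Kof φ, Set.mem_image_of_mem _ hφ, ?_⟩
    intro u hu
    have hLS : Kof φ ∈ SClass d γ := hKS φ hφ
    obtain ⟨c, hc, hucball⟩ := Set.mem_iUnion₂.1 (hCcov hu)
    have hucn : ‖u - c‖ < δ := by
      rw [← dist_eq_norm]; exact hucball
    have h1 : |gauge K u - gauge K c| ≤ γ⁻¹ * δ := by
      refine (gauge_abs_sub hγ (SClass.interior_mem hK) (SClass.ker hK) u c).trans ?_
      exact mul_le_mul_of_nonneg_left hucn.le (by positivity)
    have h3 : |gauge (Kof φ) c - gauge (Kof φ) u| ≤ γ⁻¹ * δ := by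
      refine (gauge_abs_sub hγ (SClass.interior_mem hLS) (SClass.ker hLS) c u).trans ?_
      rw [norm_sub_rev]
      exact mul_le_mul_of_nonneg_left hucn.le (by positivity)
    have h2 : |gauge K c - gauge (Kof φ) c| ≤ ε / 2 := by
      have hco : |gauge K c - gauge (Kof φ) c| = dist (Φ K ⟨c, hc⟩) (Φ (Kof φ) ⟨c, hc⟩) := by
        rw [Real.dist_eq]
      rw [hco]
      refine (dist_le_pi_dist (Φ K) (Φ (Kof φ)) ⟨c, hc⟩).trans ?_
      rw [hKΦ φ hφ]
      exact hballφ'.le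
    have hδγ : γ⁻¹ * δ = ε / 4 := by
      rw [hδdef]; field_simp
    calc |gauge K u - gauge (Kof φ) u|
        ≤ |gauge K u - gauge K c| + |gauge K c - gauge (Kof φ) c|
          + |gauge (Kof φ) c - gauge (Kof φ) u| := by
            refine (abs_sub_le _ (gauge (Kof φ) c) _).trans ?_
            have := abs_sub_le (gauge K u) (gauge K c) (gauge (Kof φ) c)
            linarith
      _ ≤ γ⁻¹ * δ + ε / 2 + γ⁻¹ * δ := add_le_add (add_le_add h1 h2) h3
      _ ≤ ε := by rw [hδγ]; linarith


lemma tendsto_abs_event {f : ℕ → ℝ} {a δ : ℝ} (h : Tendsto f atTop (𝓝 a)) (hδ : 0 < δ) :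
    ∀ᶠ N in atTop, |f N - a| < δ := by
  obtain ⟨N₀, hN₀⟩ := Metric.tendsto_atTop.1 h δ hδ
  exact eventually_atTop.2 ⟨N₀, fun n hn => by simpa [Real.dist_eq] using hN₀ n hn⟩

lemma gauge_integrable {ρ : Measure (Euc d)} (hγ : 0 < γ) {K : Set (Euc d)}
    (hK : K ∈ SClass d γ) (hρ : Integrable (fun x : Euc d => ‖x‖) ρ) :
    Integrable (gauge K) ρ := by
  refine (hρ.const_mul γ⁻¹).mono'
    ((gauge_cont hγ (SClass.interior_mem hK) (SClass.ker hK)).measurable.aestronglyMeasurable) ?_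
  exact Eventually.of_forall fun x => by
    rw [Real.norm_eq_abs]
    exact gauge_abs_le hγ (SClass.interior_mem hK) (SClass.ker hK) x

end UniformSLLNAux

set_option maxHeartbeats 1000000 in
open UniformSLLNAux in
/-- Uniform strong law of large numbers for the adversarial objective over
the class `S^d(γ,1)`: the empirical objective converges to the population objective,
uniformly over `S^d(γ,1)`, almost surely. -/
theorem uniform_convergence_empirical_Fobj {d : ℕ} (hd : 1 ≤ d) (γ : ℝ) (hγ : 0 < γ)
    (μ ν : Measure (Euc d)) [IsProbabilityMeasure μ] [IsProbabilityMeasure ν]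
    (hμ : Integrable (fun x => ‖x‖) μ) (hν : Integrable (fun x => ‖x‖) ν)
    {Ω : Type} [MeasureSpace Ω] [IsProbabilityMeasure (volume : Measure Ω)]
    (X Y : ℕ → Ω → Euc d)
    (hXm : ∀ j, Measurable (X j)) (hYm : ∀ j, Measurable (Y j))
    (hXindep : ProbabilityTheory.iIndepFun X (volume : Measure Ω))
    (hYindep : ProbabilityTheory.iIndepFun Y (volume : Measure Ω))
    (hXlaw : ∀ j, Measure.map (X j) (volume : Measure Ω) = μ) (hYlaw : ∀ j, Measure.map (Y j) (volume : Measure Ω) = ν) :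
    ∀ᵐ ω ∂(volume : Measure Ω),
      Tendsto (fun N : ℕ =>
        ⨆ K ∈ {K : Set (Euc d) | IsStarBody K ∧
            closedBall (0 : Euc d) γ ⊆ starKernel K ∧ volume K = 1},
          |Fobj K (empiricalMeasure X ω N) (empiricalMeasure Y ω N) - Fobj K μ ν|)
        atTop (nhds 0) := by
  classical
  have hgmeas : ∀ K ∈ SClass d γ, Measurable (gauge K) := fun K hK =>
    (gauge_cont hγ (SClass.interior_mem hK) (SClass.ker hK)).measurable
  choose 𝒩 h𝒩fin h𝒩sub h𝒩net using fun m : ℕ =>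
    exists_net (d := d) hγ (ε := ((m : ℝ) + 1)⁻¹) (by positivity)
  have hA : ∀ᵐ ω ∂(volume : Measure Ω),
      Tendsto (fun N => ∫ x, ‖x‖ ∂(empiricalMeasure X ω N)) atTop (𝓝 (∫ x, ‖x‖ ∂μ)) :=
    slln_aux X hXm hXindep hXlaw measurable_norm hμ
  have hB : ∀ᵐ ω ∂(volume : Measure Ω),
      Tendsto (fun N => ∫ x, ‖x‖ ∂(empiricalMeasure Y ω N)) atTop (𝓝 (∫ x, ‖x‖ ∂ν)) :=
    slln_aux Y hYm hYindep hYlaw measurable_norm hν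
  have hL : ∀ᵐ ω ∂(volume : Measure Ω), ∀ m : ℕ, ∀ L ∈ 𝒩 m,
      Tendsto (fun N => ∫ x, gauge L x ∂(empiricalMeasure X ω N)) atTop
        (𝓝 (∫ x, gauge L x ∂μ)) ∧
      Tendsto (fun N => ∫ x, gauge L x ∂(empiricalMeasure Y ω N)) atTop
        (𝓝 (∫ x, gauge L x ∂ν)) := by
    rw [ae_all_iff]
    intro m
    rw [eventually_all_finite (h𝒩fin m)]
    intro L hLm
    have hLS := h𝒩sub m hLm
    exact (slln_aux X hXm hXindep hXlaw (hgmeas L hLS) (gauge_integrable hγ hLS hμ)).and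
      (slln_aux Y hYm hYindep hYlaw (hgmeas L hLS) (gauge_integrable hγ hLS hν))
  filter_upwards [hA, hB, hL] with ω hAω hBω hLω
  set Cμ : ℝ := ∫ x, ‖x‖ ∂μ with hCμdef
  set Cν : ℝ := ∫ x, ‖x‖ ∂ν with hCνdef
  have hCμ0 : 0 ≤ Cμ := integral_nonneg fun x => norm_nonneg x
  have hCν0 : 0 ≤ Cν := integral_nonneg fun x => norm_nonneg x
  rw [Metric.tendsto_atTop]
  intro ε hε
  set C : ℝ := 2 * Cμ + 2 * Cν + 3 with hCdef
  have hCpos : 0 < C := by rw [hCdef]; linarith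
  obtain ⟨m, hm⟩ := exists_nat_gt (C / (ε / 2))
  set η : ℝ := ((m : ℝ) + 1)⁻¹ with hηdef
  have hηpos : 0 < η := by rw [hηdef]; positivity
  have hm1 : C / (ε / 2) < (m : ℝ) + 1 := hm.trans (lt_add_one _)
  have hηC : η * C < ε / 2 := by
    have h1 : C < ((m : ℝ) + 1) * (ε / 2) := (div_lt_iff₀ (by positivity)).1 hm1
    calc η * C < η * (((m : ℝ) + 1) * (ε / 2)) := by
          exact mul_lt_mul_of_pos_left h1 hηpos
      _ = ε / 2 := by rw [hηdef]; field_simp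
  have hev1 : ∀ᶠ N in atTop, ∀ L ∈ 𝒩 m,
      |(∫ x, gauge L x ∂(empiricalMeasure X ω N)) - ∫ x, gauge L x ∂μ| < ε / 8 ∧
      |(∫ x, gauge L x ∂(empiricalMeasure Y ω N)) - ∫ x, gauge L x ∂ν| < ε / 8 := by
    rw [eventually_all_finite (h𝒩fin m)]
    intro L hLm
    exact (tendsto_abs_event (hLω m L hLm).1 (by positivity)).and
      (tendsto_abs_event (hLω m L hLm).2 (by positivity))
  have hev2 : ∀ᶠ N in atTop, (∫ x, ‖x‖ ∂(empiricalMeasure X ω N)) ≤ Cμ + 1 := by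
    filter_upwards [tendsto_abs_event hAω one_pos] with N hN
    have := abs_lt.1 hN
    linarith [this.2]
  have hev3 : ∀ᶠ N in atTop, (∫ x, ‖x‖ ∂(empiricalMeasure Y ω N)) ≤ Cν + 1 := by
    filter_upwards [tendsto_abs_event hBω one_pos] with N hN
    have := abs_lt.1 hN
    linarith [this.2]
  obtain ⟨N₀, hN₀⟩ := eventually_atTop.1 ((hev1.and (hev2.and hev3)))
  refine ⟨N₀, fun n hn => ?_⟩
  obtain ⟨h1, h2, h3⟩ := hN₀ n hn
  have key : ∀ K, K ∈ SClass d γ →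
      |Fobj K (empiricalMeasure X ω n) (empiricalMeasure Y ω n) - Fobj K μ ν|
        ≤ ε / 2 + ε / 4 := by
    intro K hK
    obtain ⟨L, hLmem, hnet⟩ := h𝒩net m K hK
    have hLS := h𝒩sub m hLmem
    have hptw : ∀ x, |gauge K x - gauge L x| ≤ η * ‖x‖ := gauge_diff_ext hnet
    have hsmK : StronglyMeasurable (gauge K) := (hgmeas K hK).stronglyMeasurable
    have hsmL : StronglyMeasurable (gauge L) := (hgmeas L hLS).stronglyMeasurable
    have hsmn : StronglyMeasurable fun x : Euc d => ‖x‖ :=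
      measurable_norm.stronglyMeasurable
    have e1 : |(∫ x, gauge K x ∂(empiricalMeasure X ω n))
        - ∫ x, gauge L x ∂(empiricalMeasure X ω n)|
        ≤ η * ∫ x, ‖x‖ ∂(empiricalMeasure X ω n) :=
      abs_integral_sub_le (integrable_empirical X ω n hsmK) (integrable_empirical X ω n hsmL)
        (integrable_empirical X ω n hsmn) hηpos.le hptw
    have e2 : |(∫ x, gauge K x ∂(empiricalMeasure Y ω n))
        - ∫ x, gauge L x ∂(empiricalMeasure Y ω n)|
        ≤ η * ∫ x, ‖x‖ ∂(empiricalMeasure Y ω n) :=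
      abs_integral_sub_le (integrable_empirical Y ω n hsmK) (integrable_empirical Y ω n hsmL)
        (integrable_empirical Y ω n hsmn) hηpos.le hptw
    have e3 : |(∫ x, gauge K x ∂μ) - ∫ x, gauge L x ∂μ| ≤ η * Cμ :=
      abs_integral_sub_le (gauge_integrable hγ hK hμ) (gauge_integrable hγ hLS hμ) hμ
        hηpos.le hptw
    have e4 : |(∫ x, gauge K x ∂ν) - ∫ x, gauge L x ∂ν| ≤ η * Cν :=
      abs_integral_sub_le (gauge_integrable hγ hK hν) (gauge_integrable hγ hLS hν) hν
        hηpos.le hptw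
    obtain ⟨f1, f2⟩ := h1 L hLmem
    have q1 : η * ∫ x, ‖x‖ ∂(empiricalMeasure X ω n) ≤ η * (Cμ + 1) :=
      mul_le_mul_of_nonneg_left h2 hηpos.le
    have q2 : η * ∫ x, ‖x‖ ∂(empiricalMeasure Y ω n) ≤ η * (Cν + 1) :=
      mul_le_mul_of_nonneg_left h3 hηpos.le
    have q3 : η * (Cμ + 1) + η * (Cν + 1) + η * Cμ + η * Cν ≤ η * C := by
      have hle : 2 * Cμ + 2 * Cν + 2 ≤ C := by rw [hCdef]; linarith
      calc η * (Cμ + 1) + η * (Cν + 1) + η * Cμ + η * Cν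
          = η * (2 * Cμ + 2 * Cν + 2) := by ring
        _ ≤ η * C := mul_le_mul_of_nonneg_left hle hηpos.le
    simp only [Fobj]
    have a1 := abs_le.1 e1
    have a2 := abs_le.1 e2
    have a3 := abs_le.1 e3
    have a4 := abs_le.1 e4
    have b1 := abs_lt.1 f1
    have b2 := abs_lt.1 f2
    rw [abs_le]
    constructor <;>
      linarith [a1.1, a1.2, a2.1, a2.2, a3.1, a3.2, a4.1, a4.2, b1.1, b1.2,
        b2.1, b2.2, q1, q2, q3, hηC]
  rw [Real.dist_eq, sub_zero,
    abs_of_nonneg (Real.iSup_nonneg fun K => Real.iSup_nonneg fun _ => abs_nonneg _)]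
  have hsup_le : (⨆ K ∈ {K : Set (Euc d) | IsStarBody K ∧
      closedBall (0 : Euc d) γ ⊆ starKernel K ∧ volume K = 1},
      |Fobj K (empiricalMeasure X ω n) (empiricalMeasure Y ω n) - Fobj K μ ν|)
      ≤ ε / 2 + ε / 4 :=
    Real.iSup_le (fun K => Real.iSup_le (fun hK => key K hK) (by positivity)) (by positivity)
  calc (⨆ K ∈ {K : Set (Euc d) | IsStarBody K ∧
      closedBall (0 : Euc d) γ ⊆ starKernel K ∧ volume K = 1},
      |Fobj K (empiricalMeasure X ω n) (empiricalMeasure Y ω n) - Fobj K μ ν|)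
      ≤ ε / 2 + ε / 4 := hsup_le
    _ < ε := by linarith
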